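/- Let (π_j^{(b)})_{j∈[p],b∈[B]} be [0,1]-valued random variables, γ ∈ (0,1], ᾱ ∈ [0,1], and N ⊆ [p]. Define Q_j = (p/γ) q_γ({π_j^{(b)}}_b), ĥ = max{i : Q_{(i)} ≤ i ᾱ} (with Q_{(1)} ≤ ... ≤ Q_{(p)}), and Ŝ = {j : Q_j ≤ Q_{(ĥ)}}. If there exists C ≥ 0 such that P(π_i^{(b)} ≤ t) ≤ C t for all t ≥ 0, all b ∈ [B], and all i ∈ N, then E[|Ŝ ∩ N| / max(|Ŝ|,1)] ≤ (|N| C / p) (Σ_{j=1}^p 1/j) ᾱ. -/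

import Mathlib

open MeasureTheory
open scoped ENNReal

noncomputable def quantileGamma {B : ℕ} (γ : ℝ) (v : Fin B → ℝ) : ℝ :=
  sInf {x : ℝ | γ * B ≤ (({b | v b ≤ x} : Set (Fin B)).ncard : ℝ)}

namespace QAux

variable {B : ℕ} {γ : ℝ}

lemma qset_nonempty (hB : 1 ≤ B) (hγ1 : γ ≤ 1) (v : Fin B → ℝ) :
    {x : ℝ | γ * B ≤ (({b | v b ≤ x} : Set (Fin B)).ncard : ℝ)}.Nonempty := by
  have hne : (Finset.univ : Finset (Fin B)).Nonempty := by
    simpa [Finset.univ_nonempty_iff] using Fin.pos_iff_nonempty.mp hB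
  obtain ⟨b0, -, hb0⟩ := Finset.exists_max_image Finset.univ v hne
  refine ⟨v b0, ?_⟩
  have : ({b | v b ≤ v b0} : Set (Fin B)) = Set.univ := by
    ext b; simpa using hb0 b (Finset.mem_univ b)
  simp only [Set.mem_setOf_eq, this, Set.ncard_univ, Nat.card_eq_fintype_card, Fintype.card_fin]
  have hB0 : (0:ℝ) ≤ B := Nat.cast_nonneg B
  nlinarith

lemma qset_lb (hB : 1 ≤ B) (hγ0 : 0 < γ) {v : Fin B → ℝ} (hv : ∀ b, 0 ≤ v b) :
    ∀ x ∈ {x : ℝ | γ * B ≤ (({b | v b ≤ x} : Set (Fin B)).ncard : ℝ)}, (0:ℝ) ≤ x := by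
  intro x hx
  simp only [Set.mem_setOf_eq] at hx
  by_contra hx0
  push_neg at hx0
  have hempty : ({b | v b ≤ x} : Set (Fin B)) = ∅ := by
    ext b; simp only [Set.mem_setOf_eq, Set.mem_empty_iff_false, iff_false]
    intro h; exact absurd (le_trans (hv b) h) (not_le.mpr hx0)
  rw [hempty] at hx
  simp only [Set.ncard_empty, Nat.cast_zero] at hx
  have hB0 : (1:ℝ) ≤ B := by exact_mod_cast hB
  nlinarith

lemma qset_bddBelow (hB : 1 ≤ B) (hγ0 : 0 < γ) {v : Fin B → ℝ} (hv : ∀ b, 0 ≤ v b) :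
    BddBelow {x : ℝ | γ * B ≤ (({b | v b ≤ x} : Set (Fin B)).ncard : ℝ)} :=
  ⟨0, qset_lb hB hγ0 hv⟩

lemma quantile_nonneg (hB : 1 ≤ B) (hγ0 : 0 < γ) (hγ1 : γ ≤ 1) {v : Fin B → ℝ}
    (hv : ∀ b, 0 ≤ v b) : 0 ≤ quantileGamma γ v :=
  le_csInf (qset_nonempty hB hγ1 v) (qset_lb hB hγ0 hv)

lemma quantile_le_iff (hB : 1 ≤ B) (hγ0 : 0 < γ) (hγ1 : γ ≤ 1) {v : Fin B → ℝ}
    (hv : ∀ b, 0 ≤ v b) (s : ℝ) :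
    quantileGamma γ v ≤ s ↔ γ * B ≤ (({b | v b ≤ s} : Set (Fin B)).ncard : ℝ) := by
  rw [quantileGamma]
  constructor
  · intro hle
    by_contra hcount
    push_neg at hcount
    have hT : ∃ b, s < v b := by
      by_contra hT
      push_neg at hT
      have : ({b | v b ≤ s} : Set (Fin B)) = Set.univ := by
        ext b; simpa using hT b
      rw [this] at hcount
      simp only [Set.ncard_univ, Nat.card_eq_fintype_card, Fintype.card_fin] at hcount
      have hB0 : (1:ℝ) ≤ B := by exact_mod_cast hB
      nlinarith
    classical
    set T : Finset (Fin B) := Finset.univ.filter (fun b => s < v b) with hTdef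
    have hTne : T.Nonempty := by
      obtain ⟨bT, hbT⟩ := hT
      exact ⟨bT, by simp [hTdef, hbT]⟩
    obtain ⟨b2, hb2T, hb2min⟩ := T.exists_min_image v hTne
    have hb2 : s < v b2 := by simpa [hTdef] using hb2T
    have hεpos : 0 < v b2 - s := by linarith
    have hlt : sInf {x : ℝ | γ * B ≤ (({b | v b ≤ x} : Set (Fin B)).ncard : ℝ)} < s + (v b2 - s) := by
      linarith
    obtain ⟨x, hxS, hxlt⟩ := exists_lt_of_csInf_lt (qset_nonempty hB hγ1 v) hlt
    simp only [Set.mem_setOf_eq] at hxS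
    have hsub : ({b | v b ≤ x} : Set (Fin B)) ⊆ {b | v b ≤ s} := by
      intro b hbx
      simp only [Set.mem_setOf_eq] at hbx ⊢
      by_contra hbs
      push_neg at hbs
      have hbT : b ∈ T := by simp [hTdef, hbs]
      have := hb2min b hbT
      linarith
    have hmono : ({b | v b ≤ x} : Set (Fin B)).ncard ≤ ({b | v b ≤ s} : Set (Fin B)).ncard :=
      Set.ncard_le_ncard hsub (Set.toFinite _)
    have : (({b | v b ≤ x} : Set (Fin B)).ncard : ℝ) ≤ (({b | v b ≤ s} : Set (Fin B)).ncard : ℝ) := by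
      exact_mod_cast hmono
    linarith
  · intro h
    exact csInf_le (qset_bddBelow hB hγ0 hv) h

lemma count_cast (v : Fin B → ℝ) (s : ℝ) :
    (({b | v b ≤ s} : Set (Fin B)).ncard : ℝ) = ∑ b : Fin B, if v b ≤ s then (1:ℝ) else 0 := by
  classical
  have h1 : ({b | v b ≤ s} : Set (Fin B)) = ↑(Finset.univ.filter (fun b => v b ≤ s)) := by
    ext b; simp
  rw [h1, Set.ncard_coe_finset, Finset.card_filter]
  push_cast
  exact Finset.sum_congr rfl (fun b _ => by split <;> simp)

variable {Ω : Type*} [MeasurableSpace Ω]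

lemma measSet_quantile (hB : 1 ≤ B) (hγ0 : 0 < γ) (hγ1 : γ ≤ 1)
    (f : Fin B → Ω → ℝ) (hf : ∀ b, Measurable (f b))
    (hr : ∀ b ω, 0 ≤ f b ω) (s : ℝ) :
    MeasurableSet {ω | quantileGamma γ (fun b => f b ω) ≤ s} := by
  have hset : {ω | quantileGamma γ (fun b => f b ω) ≤ s}
      = {ω | γ * B ≤ ∑ b : Fin B, if f b ω ≤ s then (1:ℝ) else 0} := by
    ext ω
    rw [Set.mem_setOf_eq, Set.mem_setOf_eq,
      quantile_le_iff hB hγ0 hγ1 (fun b => hr b ω) s, count_cast]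
  rw [hset]
  have hg : Measurable (fun ω => ∑ b : Fin B, if f b ω ≤ s then (1:ℝ) else 0) := by
    apply Finset.measurable_sum
    intro b _
    exact Measurable.ite (measurableSet_le (hf b) measurable_const) measurable_const
      measurable_const
  exact measurableSet_le measurable_const hg

lemma prob_quantile_le (hB : 1 ≤ B) (hγ0 : 0 < γ) (hγ1 : γ ≤ 1)
    (μ : Measure Ω) [IsProbabilityMeasure μ]
    (f : Fin B → Ω → ℝ) (hf : ∀ b, Measurable (f b)) (hr : ∀ b ω, 0 ≤ f b ω)
    (C s : ℝ) (hC : 0 ≤ C) (hs : 0 ≤ s)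
    (hcond : ∀ b, (μ {ω | f b ω ≤ s}).toReal ≤ C * s) :
    (μ {ω | quantileGamma γ (fun b => f b ω) ≤ s}).toReal ≤ C * s / γ := by
  classical
  set g : Ω → ℝ≥0∞ := fun ω => ∑ b : Fin B, if f b ω ≤ s then (1:ℝ≥0∞) else 0 with hgdef
  have hgmeas : Measurable g := by
    apply Finset.measurable_sum
    intro b _
    exact Measurable.ite (measurableSet_le (hf b) measurable_const) measurable_const
      measurable_const
  have hsetEq : {ω | quantileGamma γ (fun b => f b ω) ≤ s}
      = {ω | ENNReal.ofReal (γ * B) ≤ g ω} := by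
    ext ω
    rw [Set.mem_setOf_eq, Set.mem_setOf_eq,
      quantile_le_iff hB hγ0 hγ1 (fun b => hr b ω) s]
    have hcount : g ω = ((({b | f b ω ≤ s} : Set (Fin B)).ncard : ℕ) : ℝ≥0∞) := by
      have h1 : ({b | f b ω ≤ s} : Set (Fin B)) = ↑(Finset.univ.filter (fun b => f b ω ≤ s)) := by
        ext b; simp
      rw [hgdef, h1, Set.ncard_coe_finset, Finset.card_filter]
      push_cast
      exact (Finset.sum_congr rfl (fun b _ => by split <;> simp)).symm
    rw [hcount]
    rw [← ENNReal.ofReal_natCast, ENNReal.ofReal_le_ofReal_iff (Nat.cast_nonneg _)]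
  have hlint : ∫⁻ ω, g ω ∂μ = ∑ b : Fin B, μ {ω | f b ω ≤ s} := by
    rw [hgdef]
    rw [lintegral_finset_sum _ (fun b _ => Measurable.ite (measurableSet_le (hf b)
      measurable_const) measurable_const measurable_const)]
    refine Finset.sum_congr rfl (fun b _ => ?_)
    have : (fun ω => if f b ω ≤ s then (1:ℝ≥0∞) else 0)
        = ({ω | f b ω ≤ s} : Set Ω).indicator (fun _ => (1:ℝ≥0∞)) := by
      ext ω; simp [Set.indicator_apply, Set.mem_setOf_eq]
    rw [this, lintegral_indicator_const (measurableSet_le (hf b) measurable_const), one_mul]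
  have hbound : ∫⁻ ω, g ω ∂μ ≤ (B : ℝ≥0∞) * ENNReal.ofReal (C * s) := by
    rw [hlint]
    calc ∑ b : Fin B, μ {ω | f b ω ≤ s}
        ≤ ∑ _b : Fin B, ENNReal.ofReal (C * s) := by
          refine Finset.sum_le_sum (fun b _ => ?_)
          rw [← ENNReal.ofReal_toReal (measure_ne_top μ _)]
          exact ENNReal.ofReal_le_ofReal (hcond b)
      _ = (B : ℝ≥0∞) * ENNReal.ofReal (C * s) := by
          simp [Finset.sum_const, mul_comm]
  have hmarkov := mul_meas_ge_le_lintegral₀ (μ := μ) hgmeas.aemeasurable (ENNReal.ofReal (γ * B))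
  rw [hsetEq]
  have h2 : ENNReal.ofReal (γ * B) * μ {ω | ENNReal.ofReal (γ * B) ≤ g ω}
      ≤ (B : ℝ≥0∞) * ENNReal.ofReal (C * s) := le_trans hmarkov hbound
  have hfin1 : (B : ℝ≥0∞) * ENNReal.ofReal (C * s) ≠ ⊤ := by
    exact ENNReal.mul_ne_top (ENNReal.natCast_ne_top B) ENNReal.ofReal_ne_top
  have h3 := ENNReal.toReal_mono hfin1 h2
  rw [ENNReal.toReal_mul, ENNReal.toReal_mul, ENNReal.toReal_ofReal
      (by positivity : (0:ℝ) ≤ γ * B), ENNReal.toReal_natCast,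
      ENNReal.toReal_ofReal (by positivity : (0:ℝ) ≤ C * s)] at h3
  set x := (μ {ω | ENNReal.ofReal (γ * B) ≤ g ω}).toReal with hxdef
  have hx0 : 0 ≤ x := ENNReal.toReal_nonneg
  have hBpos : (0:ℝ) < B := by exact_mod_cast lt_of_lt_of_le Nat.zero_lt_one hB
  have hγx : γ * x ≤ C * s := by
    have := le_of_mul_le_mul_left (by nlinarith : (B:ℝ) * (γ * x) ≤ (B:ℝ) * (C * s)) hBpos
    linarith
  rw [le_div_iff₀ hγ0]
  linarith

lemma abel_bound (p : ℕ) (hp : 1 ≤ p) (m : ℕ → ℝ) (hm : ∀ k, 0 ≤ m k)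
    (D : ℝ) (hD : 0 ≤ D)
    (hM : ∀ n, 1 ≤ n → n ≤ p → (∑ k ∈ Finset.Icc 1 n, m k) ≤ D * n) :
    ∑ k ∈ Finset.Icc 1 p, (1/(k:ℝ)) * m k ≤ D * ∑ k ∈ Finset.Icc 1 p, (1/(k:ℝ)) := by
  have key : ∀ n, 1 ≤ n → n ≤ p →
      ∑ k ∈ Finset.Icc 1 n, (1/(k:ℝ)) * m k
        ≤ D * (∑ k ∈ Finset.Icc 1 n, (1/(k:ℝ))) - D
          + (∑ k ∈ Finset.Icc 1 n, m k) / n := by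
    intro n hn
    induction n, hn using Nat.le_induction with
    | base => intro _; simp
    | succ n hn ih =>
      intro hnp
      have hnp' : n ≤ p := le_trans (Nat.le_succ n) hnp
      have ih' := ih hnp'
      have hMn := hM n hn hnp'
      set Mn := ∑ k ∈ Finset.Icc 1 n, m k with hMndef
      have hMn0 : 0 ≤ Mn := Finset.sum_nonneg (fun k _ => hm k)
      have ha1 : (1:ℝ) ≤ (n:ℝ) := by exact_mod_cast hn
      have ha0 : (0:ℝ) < (n:ℝ) := by linarith
      have ha10 : (0:ℝ) < (n:ℝ) + 1 := by linarith
      rw [Finset.sum_Icc_succ_top (Nat.le_succ_of_le hn),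
        Finset.sum_Icc_succ_top (Nat.le_succ_of_le hn),
        Finset.sum_Icc_succ_top (Nat.le_succ_of_le hn)]
      push_cast
      have e1 : Mn / (n:ℝ) - Mn / ((n:ℝ) + 1) = Mn / ((n:ℝ) * ((n:ℝ)+1)) := by
        field_simp; ring
      have e2 : Mn / ((n:ℝ) * ((n:ℝ)+1)) ≤ (D * (n:ℝ)) / ((n:ℝ) * ((n:ℝ)+1)) := by
        gcongr
      have e3 : (D * (n:ℝ)) / ((n:ℝ) * ((n:ℝ)+1)) = D / ((n:ℝ)+1) := by
        field_simp
      have r1 : (Mn + m (n+1)) / ((n:ℝ)+1) = Mn / ((n:ℝ)+1) + (1/((n:ℝ)+1)) * m (n+1) := by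
        field_simp
      have hEq : (∑ k ∈ Finset.Icc 1 n, m k) = Mn := rfl
      have e5 : D * ((∑ k ∈ Finset.Icc 1 n, 1/(k:ℝ)) + 1/((n:ℝ)+1))
          = D * (∑ k ∈ Finset.Icc 1 n, 1/(k:ℝ)) + D / ((n:ℝ)+1) := by
        field_simp
      rw [hEq]
      linarith
  have hfin := key p hp le_rfl
  have hMp := hM p hp le_rfl
  have hp0 : (0:ℝ) < (p:ℝ) := by exact_mod_cast lt_of_lt_of_le Nat.zero_lt_one hp
  have : (∑ k ∈ Finset.Icc 1 p, m k) / (p:ℝ) ≤ D := by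
    rw [div_le_iff₀ hp0]
    linarith [mul_comm D (p:ℝ)]
  linarith

end QAux
theorem stmt_10 {Ω : Type*} [MeasurableSpace Ω] (μ : Measure Ω)
    [IsProbabilityMeasure μ] (p B : ℕ) (hp : 1 ≤ p) (hB : 1 ≤ B)
    (γ : ℝ) (hγ0 : 0 < γ) (hγ1 : γ ≤ 1) (abar : ℝ) (habar : abar ∈ Set.Icc (0:ℝ) 1)
    (π : Fin p → Fin B → Ω → ℝ) (hmeas : ∀ j b, Measurable (π j b))
    (hrange : ∀ j b ω, π j b ω ∈ Set.Icc (0:ℝ) 1)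
    (N : Set (Fin p)) (C : ℝ) (hC : 0 ≤ C)
    (hcond : ∀ t : ℝ, 0 ≤ t → ∀ b : Fin B, ∀ i ∈ N,
      (μ {ω | π i b ω ≤ t}).toReal ≤ C * t) :
    let Q : Fin p → Ω → ℝ := fun j ω =>
      ((p : ℝ) / γ) * quantileGamma γ (fun b => π j b ω)
    let Shat : Ω → Set (Fin p) := fun ω =>
      {j | ∃ i : ℕ, 1 ≤ i ∧ i ≤ p ∧
        (i : ℝ) ≤ (({j' | Q j' ω ≤ i * abar} : Set (Fin p)).ncard : ℝ) ∧
        Q j ω ≤ i * abar}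
    ∫ ω, (((Shat ω ∩ N).ncard : ℝ) / max ((Shat ω).ncard : ℝ) 1) ∂μ ≤
      ((N.ncard : ℝ) * C / p) * (∑ j ∈ Finset.Icc 1 p, (1 / (j : ℝ))) * abar := by
  intro Q Shat
  classical
  have habar0 : 0 ≤ abar := habar.1
  have hp0 : (0:ℝ) < p := by exact_mod_cast lt_of_lt_of_le Nat.zero_lt_one hp
  have hQ0 : ∀ j ω, 0 ≤ Q j ω := fun j ω =>
    mul_nonneg (by positivity) (QAux.quantile_nonneg hB hγ0 hγ1 (fun b => (hrange j b ω).1))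
  have hQle : ∀ j ω t, (Q j ω ≤ t ↔ quantileGamma γ (fun b => π j b ω) ≤ t * γ / p) := by
    intro j ω t
    have hpγ : 0 < (p:ℝ)/γ := by positivity
    rw [show Q j ω = ((p:ℝ)/γ) * quantileGamma γ (fun b => π j b ω) from rfl, mul_comm,
      ← le_div_iff₀ hpγ, div_div_eq_mul_div]
  have hQsetEq : ∀ j t, {ω | Q j ω ≤ t} = {ω | quantileGamma γ (fun b => π j b ω) ≤ t * γ / p} := by
    intro j t; ext ω; exact hQle j ω t
  have hQmeasSet : ∀ (j : Fin p) (t : ℝ), MeasurableSet {ω | Q j ω ≤ t} := by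
    intro j t
    rw [hQsetEq j t]
    exact QAux.measSet_quantile hB hγ0 hγ1 (fun b => π j b) (hmeas j)
      (fun b ω => (hrange j b ω).1) _
  have hQprob : ∀ j ∈ N, ∀ t : ℝ, 0 ≤ t → (μ {ω | Q j ω ≤ t}).toReal ≤ C * t / p := by
    intro j hj t ht
    rw [hQsetEq j t]
    have hs : 0 ≤ t * γ / p := by positivity
    have h1 := QAux.prob_quantile_le hB hγ0 hγ1 μ (fun b => π j b) (hmeas j)
      (fun b ω => (hrange j b ω).1) C (t * γ / p) hC hs
      (fun b => hcond (t * γ / p) hs b j hj)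
    have h2 : C * (t * γ / p) / γ = C * t / p := by
      field_simp
    linarith [h1, h2.le, h2.ge]
  -- the disjoint "first level" sets
  set Bs : Fin p → ℕ → Set Ω := fun j k =>
    {ω | Q j ω ≤ (k:ℝ) * abar ∧ ∀ m : ℕ, 1 ≤ m → m < k → ¬ Q j ω ≤ (m:ℝ) * abar}
    with hBsdef
  have hBmeas : ∀ j k, MeasurableSet (Bs j k) := by
    intro j k
    have hrepr : Bs j k = {ω | Q j ω ≤ (k:ℝ) * abar} ∩
        ⋂ (m : ℕ), ⋂ (_ : 1 ≤ m), ⋂ (_ : m < k), {ω | Q j ω ≤ (m:ℝ) * abar}ᶜ := by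
      ext ω
      simp only [hBsdef, Set.mem_setOf_eq, Set.mem_inter_iff, Set.mem_iInter,
        Set.mem_compl_iff]
    rw [hrepr]
    exact (hQmeasSet j _).inter (MeasurableSet.iInter fun m => MeasurableSet.iInter fun _ =>
      MeasurableSet.iInter fun _ => (hQmeasSet j _).compl)
  set Nfin : Finset (Fin p) := (Set.toFinite N).toFinset with hNfin
  set g : Ω → ℝ := fun ω => ∑ j ∈ Nfin, ∑ k ∈ Finset.Icc 1 p,
    (1/(k:ℝ)) * Set.indicator (Bs j k) (fun _ => (1:ℝ)) ω with hgdef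
  have hterm_nonneg : ∀ (j : Fin p) (k : ℕ) (ω : Ω),
      0 ≤ (1/(k:ℝ)) * Set.indicator (Bs j k) (fun _ => (1:ℝ)) ω := fun j k ω =>
    mul_nonneg (by positivity) (Set.indicator_nonneg (fun _ _ => zero_le_one) ω)
  -- pointwise bound
  have hpt : ∀ ω, ((Shat ω ∩ N).ncard : ℝ) / max ((Shat ω).ncard : ℝ) 1 ≤ g ω := by
    intro ω
    by_cases hSN : (Shat ω ∩ N).ncard = 0
    · rw [hSN]
      simp only [Nat.cast_zero, zero_div]
      exact Finset.sum_nonneg fun j _ => Finset.sum_nonneg fun k _ => hterm_nonneg j k ω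
    · have hSNne : (Shat ω ∩ N).Nonempty := Set.nonempty_of_ncard_ne_zero hSN
      obtain ⟨j0, hj0S, hj0N⟩ := hSNne
      set R := (Shat ω).ncard with hRdef
      set I : Finset ℕ := (Finset.Icc 1 p).filter
        (fun i => (i:ℝ) ≤ (({j' | Q j' ω ≤ (i:ℝ) * abar} : Set (Fin p)).ncard : ℝ)) with hIdef
      have hmemI : ∀ i : ℕ, 1 ≤ i → i ≤ p →
          (i:ℝ) ≤ (({j' | Q j' ω ≤ (i:ℝ) * abar} : Set (Fin p)).ncard : ℝ) → i ∈ I := by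
        intro i h1 h2 h3
        rw [hIdef, Finset.mem_filter, Finset.mem_Icc]
        exact ⟨⟨h1, h2⟩, h3⟩
      have hIne : I.Nonempty := by
        obtain ⟨i, hi1, hip, hifeas, hiQ⟩ := hj0S
        exact ⟨i, hmemI i hi1 hip hifeas⟩
      set h := I.max' hIne with hhdef
      have hhI : h ∈ I := I.max'_mem hIne
      rw [hIdef, Finset.mem_filter, Finset.mem_Icc] at hhI
      obtain ⟨⟨hh1, hhp⟩, hhfeas⟩ := hhI
      have hSeq : Shat ω = {j | Q j ω ≤ (h:ℝ) * abar} := by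
        ext j
        constructor
        · rintro ⟨i, hi1, hip, hifeas, hiQ⟩
          have hih : i ≤ h := I.le_max' i (hmemI i hi1 hip hifeas)
          have : (i:ℝ) * abar ≤ (h:ℝ) * abar :=
            mul_le_mul_of_nonneg_right (by exact_mod_cast hih) habar0
          exact le_trans hiQ this
        · intro hj
          exact ⟨h, hh1, hhp, hhfeas, hj⟩
      have hRp : R ≤ p := by
        have := Set.ncard_le_ncard (Set.subset_univ (Shat ω)) Set.finite_univ
        simpa [Set.ncard_univ] using this
      have hRcard : (({j | Q j ω ≤ (h:ℝ) * abar} : Set (Fin p)).ncard) = R := by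
        rw [hRdef, hSeq]
      have hhR : h ≤ R := by
        rw [← hRcard]
        exact_mod_cast hhfeas
      have hRh : R = h := by
        by_contra hne
        have hlt : h < R := lt_of_le_of_ne hhR (Ne.symm hne)
        have hR1 : 1 ≤ R := le_trans hh1 hhR
        have hRfeas : (R:ℝ) ≤ (({j' | Q j' ω ≤ (R:ℝ) * abar} : Set (Fin p)).ncard : ℝ) := by
          have hsub : ({j | Q j ω ≤ (h:ℝ) * abar} : Set (Fin p)) ⊆
              {j' | Q j' ω ≤ (R:ℝ) * abar} := by
            intro j hj
            simp only [Set.mem_setOf_eq] at hj ⊢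
            have : (h:ℝ) * abar ≤ (R:ℝ) * abar :=
              mul_le_mul_of_nonneg_right (by exact_mod_cast hhR) habar0
            linarith
          have := Set.ncard_le_ncard hsub (Set.toFinite _)
          rw [hRcard] at this
          exact_mod_cast this
        have : R ≤ h := I.le_max' R (hmemI R hR1 hRp hRfeas)
        omega
      have hR1 : 1 ≤ R := hRh ▸ hh1
      have hjQ : ∀ j ∈ Shat ω, Q j ω ≤ (R:ℝ) * abar := by
        intro j hj
        rw [hSeq] at hj
        rw [hRh]
        exact hj
      set SN : Finset (Fin p) := (Set.toFinite (Shat ω ∩ N)).toFinset with hSNdef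
      have hSNsub : SN ⊆ Nfin := by
        intro j hj
        rw [hSNdef, Set.Finite.mem_toFinset] at hj
        rw [hNfin, Set.Finite.mem_toFinset]
        exact hj.2
      have step2 : ∀ j ∈ SN, 1/(R:ℝ) ≤ ∑ k ∈ Finset.Icc 1 p,
          (1/(k:ℝ)) * Set.indicator (Bs j k) (fun _ => (1:ℝ)) ω := by
        intro j hj
        rw [hSNdef, Set.Finite.mem_toFinset] at hj
        have hjS : j ∈ Shat ω := hj.1
        have hjQR : Q j ω ≤ (R:ℝ) * abar := hjQ j hjS
        have hex : ∃ k : ℕ, 1 ≤ k ∧ Q j ω ≤ (k:ℝ) * abar := ⟨R, hR1, hjQR⟩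
        set k0 := Nat.find hex with hk0def
        obtain ⟨hk01, hk0Q⟩ := Nat.find_spec hex
        have hk0R : k0 ≤ R := Nat.find_min' hex ⟨hR1, hjQR⟩
        have hωB : ω ∈ Bs j k0 := by
          refine ⟨hk0Q, fun m hm1 hmk hQm => ?_⟩
          exact (Nat.find_min hex hmk) ⟨hm1, hQm⟩
        have hmem : k0 ∈ Finset.Icc 1 p := Finset.mem_Icc.mpr ⟨hk01, le_trans hk0R hRp⟩
        have hk0pos : (0:ℝ) < (k0:ℝ) := by exact_mod_cast lt_of_lt_of_le Nat.zero_lt_one hk01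
        calc 1/(R:ℝ) ≤ 1/(k0:ℝ) :=
              one_div_le_one_div_of_le hk0pos (by exact_mod_cast hk0R)
          _ = (1/(k0:ℝ)) * Set.indicator (Bs j k0) (fun _ => (1:ℝ)) ω := by
              rw [Set.indicator_of_mem hωB]; ring
          _ ≤ ∑ k ∈ Finset.Icc 1 p, (1/(k:ℝ)) * Set.indicator (Bs j k) (fun _ => (1:ℝ)) ω :=
              Finset.single_le_sum (fun k _ => hterm_nonneg j k ω) hmem
      have hRpos : (0:ℝ) < (R:ℝ) := by exact_mod_cast lt_of_lt_of_le Nat.zero_lt_one hR1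
      have hmax : max ((R:ℝ)) 1 = (R:ℝ) := max_eq_left (by exact_mod_cast hR1)
      have hcardSN : ((Shat ω ∩ N).ncard : ℝ) = (SN.card : ℝ) := by
        rw [hSNdef, Set.ncard_eq_toFinset_card _ (Set.toFinite (Shat ω ∩ N))]
      calc ((Shat ω ∩ N).ncard : ℝ) / max ((Shat ω).ncard : ℝ) 1
          = (SN.card : ℝ) * (1/(R:ℝ)) := by
            rw [hcardSN, ← hRdef, hmax]; ring
        _ = ∑ _j ∈ SN, 1/(R:ℝ) := by
            rw [Finset.sum_const, nsmul_eq_mul]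
        _ ≤ ∑ j ∈ SN, ∑ k ∈ Finset.Icc 1 p,
              (1/(k:ℝ)) * Set.indicator (Bs j k) (fun _ => (1:ℝ)) ω :=
            Finset.sum_le_sum step2
        _ ≤ g ω := Finset.sum_le_sum_of_subset_of_nonneg hSNsub
            (fun j _ _ => Finset.sum_nonneg fun k _ => hterm_nonneg j k ω)
  -- integrability and integral of g
  have hint_term : ∀ (j : Fin p) (k : ℕ),
      Integrable (fun ω => (1/(k:ℝ)) * Set.indicator (Bs j k) (fun _ => (1:ℝ)) ω) μ := by
    intro j k
    exact ((integrable_const (1:ℝ)).indicator (hBmeas j k)).const_mul _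
  have hint_g : Integrable g μ := by
    rw [hgdef]
    exact integrable_finset_sum _ fun j _ => integrable_finset_sum _ fun k _ => hint_term j k
  have hI1 : ∫ ω, (((Shat ω ∩ N).ncard : ℝ) / max ((Shat ω).ncard : ℝ) 1) ∂μ
      ≤ ∫ ω, g ω ∂μ := by
    refine integral_mono_of_nonneg (ae_of_all _ fun ω => ?_) hint_g (ae_of_all _ hpt)
    exact div_nonneg (Nat.cast_nonneg _) (le_trans zero_le_one (le_max_right _ 1))
  have hI2 : ∫ ω, g ω ∂μ = ∑ j ∈ Nfin, ∑ k ∈ Finset.Icc 1 p,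
      (1/(k:ℝ)) * (μ (Bs j k)).toReal := by
    rw [hgdef, integral_finset_sum _ fun j _ => integrable_finset_sum _ fun k _ => hint_term j k]
    refine Finset.sum_congr rfl fun j _ => ?_
    rw [integral_finset_sum _ fun k _ => hint_term j k]
    refine Finset.sum_congr rfl fun k _ => ?_
    rw [integral_const_mul, integral_indicator_const (1:ℝ) (hBmeas j k), smul_eq_mul, mul_one, measureReal_def]
  -- per-j Abel bound
  have hH0 : 0 ≤ ∑ k ∈ Finset.Icc 1 p, (1/(k:ℝ)) :=
    Finset.sum_nonneg fun k _ => by positivity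
  have htail : ∀ j ∈ Nfin, ∑ k ∈ Finset.Icc 1 p, (1/(k:ℝ)) * (μ (Bs j k)).toReal
      ≤ (C * abar / p) * ∑ k ∈ Finset.Icc 1 p, (1/(k:ℝ)) := by
    intro j hjN
    have hjN' : j ∈ N := by rw [hNfin, Set.Finite.mem_toFinset] at hjN; exact hjN
    refine QAux.abel_bound p hp _ (fun k => ENNReal.toReal_nonneg) _ (by positivity) ?_
    intro n hn1 hnp
    have hdisj : (↑(Finset.Icc 1 n) : Set ℕ).PairwiseDisjoint (Bs j) := by
      intro k hk k' hk' hne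
      rw [Finset.coe_Icc, Set.mem_Icc] at hk hk'
      apply Set.disjoint_left.mpr
      intro ω hωk hωk'
      rcases hne.lt_or_gt with hlt | hlt
      · exact hωk'.2 k hk.1 hlt hωk.1
      · exact hωk.2 k' hk'.1 hlt hωk'.1
    have hsum : ∑ k ∈ Finset.Icc 1 n, μ (Bs j k) = μ (⋃ k ∈ Finset.Icc 1 n, Bs j k) :=
      (measure_biUnion_finset hdisj fun k _ => hBmeas j k).symm
    have hsub : (⋃ k ∈ Finset.Icc 1 n, Bs j k) ⊆ {ω | Q j ω ≤ (n:ℝ) * abar} := by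
      intro ω hω
      simp only [Set.mem_iUnion] at hω
      obtain ⟨k, hk, hωk⟩ := hω
      rw [Finset.mem_Icc] at hk
      have : (k:ℝ) * abar ≤ (n:ℝ) * abar :=
        mul_le_mul_of_nonneg_right (by exact_mod_cast hk.2) habar0
      exact le_trans hωk.1 this
    calc ∑ k ∈ Finset.Icc 1 n, (μ (Bs j k)).toReal
        = (∑ k ∈ Finset.Icc 1 n, μ (Bs j k)).toReal :=
          (ENNReal.toReal_sum fun k _ => measure_ne_top μ _).symm
      _ ≤ (μ {ω | Q j ω ≤ (n:ℝ) * abar}).toReal := by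
          rw [hsum]
          exact ENNReal.toReal_mono (measure_ne_top μ _) (measure_mono hsub)
      _ ≤ C * ((n:ℝ) * abar) / p := hQprob j hjN' _ (by positivity)
      _ = (C * abar / p) * n := by ring
  have hNcard : (N.ncard : ℝ) = (Nfin.card : ℝ) := by
    rw [hNfin, Set.ncard_eq_toFinset_card N (Set.toFinite N)]
  calc ∫ ω, (((Shat ω ∩ N).ncard : ℝ) / max ((Shat ω).ncard : ℝ) 1) ∂μ
      ≤ ∫ ω, g ω ∂μ := hI1
    _ = ∑ j ∈ Nfin, ∑ k ∈ Finset.Icc 1 p, (1/(k:ℝ)) * (μ (Bs j k)).toReal := hI2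
    _ ≤ ∑ _j ∈ Nfin, (C * abar / p) * ∑ k ∈ Finset.Icc 1 p, (1/(k:ℝ)) :=
        Finset.sum_le_sum htail
    _ = (Nfin.card : ℝ) * ((C * abar / p) * ∑ k ∈ Finset.Icc 1 p, (1/(k:ℝ))) := by
        rw [Finset.sum_const, nsmul_eq_mul]
    _ = ((N.ncard : ℝ) * C / p) * (∑ j ∈ Finset.Icc 1 p, (1 / (j : ℝ))) * abar := by
        rw [hNcard]; ring
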